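/- For θ > 0 define ζ_θ = 0 if θ ≤ 1, and otherwise let ζ_θ be the unique ζ > 0 satisfying θ² = ζ² + 1 + μζ/(κν + ζ). Writing c_*(D) = inf_{q>0} H_r^{(D)}(q)/q for the road speed with diffusivity D, one has lim_{D→∞} c_*(D)/√D = inf_{θ>0} (1 + ζ_θ²)/θ, and this limit is strictly positive. -/

import Mathlib

open Real Filter Set

noncomputable section

/-- The field Lagrangian `L_f(v₁,v₂) = (v₁² + v₂²)/4 − 1`. -/
def Lf (v₁ v₂ : ℝ) : ℝ := (v₁ ^ 2 + v₂ ^ 2) / 4 - 1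

/-- The effective road Hamiltonian `H_r(q) = q² + (p_q)² + 1` built from the
critical-slope function `pq`. -/
def Hr (pq : ℝ → ℝ) (q : ℝ) : ℝ := q ^ 2 + pq q ^ 2 + 1

/-- The road Lagrangian: the Legendre transform of `Hr`. -/
def Lr (pq : ℝ → ℝ) (v : ℝ) : ℝ := ⨆ q : ℝ, (v * q - Hr pq q)

/-- `pq` assigns to each `q` the critical slope `p_q`: it equals `0` when
`(D−1)q² ≤ 1`, and otherwise it is the unique positive root of
`(D−1)q² = p² + 1 + μp/(κν + p)`. -/
def IsCriticalSlope (D μ ν κ : ℝ) (pq : ℝ → ℝ) : Prop :=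
  ∀ q : ℝ,
    ((D - 1) * q ^ 2 ≤ 1 → pq q = 0) ∧
    (1 < (D - 1) * q ^ 2 →
      0 < pq q ∧ (D - 1) * q ^ 2 = pq q ^ 2 + 1 + μ * pq q / (κ * ν + pq q))

/-- The set of candidate costs in the control problem at a point `(x,y)` with
`x ≥ 0`, `y ≥ 0`: the pure-field cost, the broken road-then-field costs, and
(when `y = 0`) the pure-road cost. -/
def Jset (pq : ℝ → ℝ) (x y : ℝ) : Set ℝ :=
  {Lf x y} ∪
    {c | ∃ τ z : ℝ, 0 < τ ∧ τ < 1 ∧ 0 ≤ z ∧ z ≤ x ∧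
      c = (1 - τ) * Lf ((x - z) / (1 - τ)) (y / (1 - τ)) + τ * Lr pq (z / τ)} ∪
    (if y = 0 then {Lr pq x} else ∅)

/-- The value function `J(x,y)`, extended evenly in `x`. -/
def J (pq : ℝ → ℝ) (x y : ℝ) : ℝ := sInf (Jset pq |x| y)
/-- The field Hamiltonian `H_f(q,p) = q² + p² + 1`. -/
def Hf (q p : ℝ) : ℝ := q ^ 2 + p ^ 2 + 1

/-- The road boundary Hamiltonian `F₀(q,p) = Dq² − μp/(κν + p)`. -/
def F0 (D μ ν κ q p : ℝ) : ℝ := D * q ^ 2 - μ * p / (κ * ν + p)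

/-- The spreading speed along the road, `inf_{q>0} H_r(q)/q`. -/
def roadSpeed (pq : ℝ → ℝ) : ℝ := sInf ((fun q => Hr pq q / q) '' Set.Ioi (0 : ℝ))

/-- The directional spreading speed in direction `ϑ` (measured from the
positive `y`-axis). -/
def cstar (pq : ℝ → ℝ) (ϑ : ℝ) : ℝ :=
  sSup {r : ℝ | 0 ≤ r ∧ J pq (r * Real.sin ϑ) (r * Real.cos ϑ) ≤ 0}

/-- Reflection across the line through the origin in direction `(cos a, sin a)`. -/
def Psi (a : ℝ) (p : ℝ × ℝ) : ℝ × ℝ :=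
  (p.1 * Real.cos (2 * a) + p.2 * Real.sin (2 * a),
   p.1 * Real.sin (2 * a) - p.2 * Real.cos (2 * a))

/-- The closed cone of opening angle `2a` between the positive `x`-axis and the
ray at angle `π/2 − 2a` from the positive `y`-axis. -/
def coneA (a : ℝ) : Set (ℝ × ℝ) :=
  {p | ∃ r ϑ : ℝ, 0 ≤ r ∧ π / 2 - 2 * a ≤ ϑ ∧ ϑ ≤ π / 2 ∧
    p = (r * Real.sin ϑ, r * Real.cos ϑ)}

/-- Asymptotics of the road speed as `D → ∞`:
`c_*(D)/√D → inf_{θ>0} (1 + ζ_θ²)/θ > 0`. -/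
theorem aux_inj (μ c : ℝ) (hμ : 0 < μ) (hc : 0 < c) {p₁ p₂ : ℝ} (h₁ : 0 < p₁) (h₂ : 0 < p₂)
    (h : p₁^2 + 1 + μ*p₁/(c+p₁) = p₂^2 + 1 + μ*p₂/(c+p₂)) : p₁ = p₂ := by
  have key : ∀ a b : ℝ, 0 < a → a < b →
      a^2 + 1 + μ*a/(c+a) < b^2 + 1 + μ*b/(c+b) := by
    intro a b ha hab
    have hda : (0:ℝ) < c + a := by linarith
    have hdb : (0:ℝ) < c + b := by linarith
    have hdiv : μ*a/(c+a) ≤ μ*b/(c+b) := by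
      rw [div_le_div_iff₀ hda hdb]
      nlinarith [mul_le_mul_of_nonneg_left hab.le (mul_pos hμ hc).le]
    nlinarith
  by_contra hne
  rcases lt_or_gt_of_ne hne with hlt | hlt
  · exact absurd h (key _ _ h₁ hlt).ne
  · exact absurd h.symm (key _ _ h₂ hlt).ne

theorem roadSpeed_asymptotics
    (μ ν κ : ℝ) (hμ : 0 < μ) (hν : 0 < ν) (hκ : 0 < κ)
    (pq : ℝ → ℝ → ℝ) (hpq : ∀ D : ℝ, 1 < D → IsCriticalSlope D μ ν κ (pq D))
    (ζ : ℝ → ℝ)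
    (hζ : ∀ θ : ℝ, 0 < θ →
      (θ ≤ 1 → ζ θ = 0) ∧
      (1 < θ → 0 < ζ θ ∧ θ ^ 2 = ζ θ ^ 2 + 1 + μ * ζ θ / (κ * ν + ζ θ))) :
    Tendsto (fun D : ℝ => roadSpeed (pq D) / Real.sqrt D) atTop
        (nhds (sInf ((fun θ : ℝ => (1 + ζ θ ^ 2) / θ) '' Set.Ioi 0))) ∧
      0 < sInf ((fun θ : ℝ => (1 + ζ θ ^ 2) / θ) '' Set.Ioi 0) := by
  have hc : 0 < κ * ν := mul_pos hκ hν
  set g : ℝ → ℝ := fun θ : ℝ => (1 + ζ θ ^ 2) / θ with hg_def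
  set L : ℝ := sInf (g '' Set.Ioi 0) with hL_def
  -- lower bound on g
  have hgpos : ∀ θ : ℝ, 0 < θ → 1/(μ+2) ≤ g θ := by
    intro θ hθ
    have hμ2 : (0:ℝ) < μ + 2 := by linarith
    rw [hg_def]
    simp only
    rw [le_div_iff₀ hθ, div_mul_eq_mul_div, div_le_iff₀ hμ2, one_mul]
    rcases le_or_gt θ 1 with h1 | h1
    · rw [(hζ θ hθ).1 h1]
      nlinarith
    · obtain ⟨hz, heq⟩ := (hζ θ hθ).2 h1
      have hd : (0:ℝ) < κ * ν + ζ θ := by linarith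
      have hfrac : μ * ζ θ / (κ * ν + ζ θ) ≤ μ := by
        rw [div_le_iff₀ hd]; nlinarith
      have h1z : θ^2 - μ ≤ 1 + ζ θ ^ 2 := by linarith
      nlinarith [sq_nonneg (θ - 1), sq_nonneg (ζ θ), mul_nonneg (by linarith : (0:ℝ) ≤ μ + 1) (sq_nonneg (ζ θ))]
  have hne : (g '' Set.Ioi 0).Nonempty := ⟨g 1, ⟨1, by norm_num, rfl⟩⟩
  have hbdd : BddBelow (g '' Set.Ioi 0) := by
    refine ⟨1/(μ+2), ?_⟩
    rintro x ⟨θ, hθ, rfl⟩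
    exact hgpos θ hθ
  have hLlb : 1/(μ+2) ≤ L := by
    rw [hL_def]
    exact le_csInf hne (by rintro x ⟨θ, hθ, rfl⟩; exact hgpos θ hθ)
  have hLpos : 0 < L := lt_of_lt_of_le (by positivity) hLlb
  -- key correspondence
  have key : ∀ D : ℝ, 1 < D → ∀ θ : ℝ, 0 < θ →
      pq D (θ / Real.sqrt (D-1)) = ζ θ := by
    intro D hD θ hθ
    have hs : 0 < Real.sqrt (D-1) := Real.sqrt_pos.2 (by linarith)
    have hs2 : Real.sqrt (D-1)^2 = D-1 := Real.sq_sqrt (by linarith)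
    have hq : (D-1) * (θ / Real.sqrt (D-1))^2 = θ^2 := by
      rw [div_pow, hs2, mul_div_cancel₀ _ (by linarith : D - 1 ≠ 0)]
    rcases le_or_gt θ 1 with h1 | h1
    · have hle : (D-1) * (θ / Real.sqrt (D-1))^2 ≤ 1 := by rw [hq]; nlinarith
      rw [((hpq D hD) _).1 hle, (hζ θ hθ).1 h1]
    · have hθ2 : 1 < θ^2 := by nlinarith
      have h2 := ((hpq D hD) (θ / Real.sqrt (D-1))).2 (by rw [hq]; exact hθ2)
      obtain ⟨hz, heq⟩ := (hζ θ hθ).2 h1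
      refine aux_inj μ (κ*ν) hμ hc h2.1 hz ?_
      rw [← h2.2, hq, heq]
  -- value formula
  have hval : ∀ D : ℝ, 1 < D → ∀ θ : ℝ, 0 < θ →
      Hr (pq D) (θ / Real.sqrt (D-1)) / (θ / Real.sqrt (D-1))
        = θ / Real.sqrt (D-1) + Real.sqrt (D-1) * g θ := by
    intro D hD θ hθ
    have hs : 0 < Real.sqrt (D-1) := Real.sqrt_pos.2 (by linarith)
    simp only [Hr, key D hD θ hθ, hg_def]
    field_simp
    ring
  -- lower bound for elements
  have hlow : ∀ D : ℝ, 1 < D → ∀ q : ℝ, 0 < q →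
      Real.sqrt (D-1) * L ≤ Hr (pq D) q / q := by
    intro D hD q hq
    have hs : 0 < Real.sqrt (D-1) := Real.sqrt_pos.2 (by linarith)
    have hθ : 0 < Real.sqrt (D-1) * q := mul_pos hs hq
    have hqe : q = (Real.sqrt (D-1) * q) / Real.sqrt (D-1) := by field_simp
    have hv := hval D hD (Real.sqrt (D-1) * q) hθ
    rw [← hqe] at hv
    rw [hv]
    have hgL : L ≤ g (Real.sqrt (D-1) * q) := csInf_le hbdd ⟨_, hθ, rfl⟩
    nlinarith [mul_le_mul_of_nonneg_left hgL hs.le]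
  have himg_ne : ∀ D : ℝ, ((fun q => Hr (pq D) q / q) '' Set.Ioi (0:ℝ)).Nonempty :=
    fun D => ⟨_, ⟨1, by norm_num, rfl⟩⟩
  have hrs_low : ∀ D : ℝ, 1 < D → Real.sqrt (D-1) * L ≤ roadSpeed (pq D) := by
    intro D hD
    apply le_csInf (himg_ne D)
    rintro x ⟨q, hq, rfl⟩
    exact hlow D hD q hq
  have hbddimg : ∀ D : ℝ, 1 < D → BddBelow ((fun q => Hr (pq D) q / q) '' Set.Ioi (0:ℝ)) := by
    intro D hD
    refine ⟨Real.sqrt (D-1) * L, ?_⟩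
    rintro x ⟨q, hq, rfl⟩
    exact hlow D hD q hq
  have hrs_up : ∀ D : ℝ, 1 < D → ∀ θ : ℝ, 0 < θ →
      roadSpeed (pq D) ≤ θ / Real.sqrt (D-1) + Real.sqrt (D-1) * g θ := by
    intro D hD θ hθ
    have hs : 0 < Real.sqrt (D-1) := Real.sqrt_pos.2 (by linarith)
    rw [← hval D hD θ hθ]
    exact csInf_le (hbddimg D hD) ⟨θ / Real.sqrt (D-1), div_pos hθ hs, rfl⟩
  -- tendsto facts
  have hsq1 : Tendsto (fun D : ℝ => Real.sqrt (D-1) / Real.sqrt D) atTop (nhds 1) := by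
    have h1 : Tendsto (fun D : ℝ => (D-1)/D) atTop (nhds 1) := by
      have h0 : Tendsto (fun D : ℝ => 1 - D⁻¹) atTop (nhds (1 - 0)) :=
        tendsto_const_nhds.sub tendsto_inv_atTop_zero
      rw [sub_zero] at h0
      refine h0.congr' ?_
      filter_upwards [eventually_gt_atTop 0] with D hD
      field_simp
    have h2 : Tendsto (fun D : ℝ => Real.sqrt ((D-1)/D)) atTop (nhds 1) := by
      have := (Real.continuous_sqrt.tendsto 1).comp h1
      simpa [Function.comp_def] using this
    refine h2.congr' ?_
    filter_upwards [eventually_ge_atTop 1] with D hD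
    rw [Real.sqrt_div (by linarith)]
  have hsqrtTop : Tendsto Real.sqrt atTop atTop := by
    rw [tendsto_atTop]
    intro b
    filter_upwards [eventually_ge_atTop (b^2)] with x h1
    calc b ≤ |b| := le_abs_self b
      _ = Real.sqrt (b^2) := (Real.sqrt_sq_eq_abs b).symm
      _ ≤ Real.sqrt x := Real.sqrt_le_sqrt h1
  have hprod : Tendsto (fun D : ℝ => Real.sqrt (D-1) * Real.sqrt D) atTop atTop := by
    have ha : Tendsto (fun D : ℝ => D - 1) atTop atTop :=
      tendsto_atTop_add_const_right _ _ tendsto_id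
    exact (hsqrtTop.comp ha).atTop_mul_atTop₀ hsqrtTop
  have hinv : Tendsto (fun D : ℝ => (Real.sqrt (D-1) * Real.sqrt D)⁻¹) atTop (nhds 0) :=
    hprod.inv_tendsto_atTop
  refine ⟨?_, hLpos⟩
  rw [Metric.tendsto_nhds]
  intro ε hε
  obtain ⟨x, ⟨θ0, hθ0, rfl⟩, hx⟩ : ∃ x ∈ g '' Set.Ioi (0:ℝ), x < L + ε/2 :=
    exists_lt_of_csInf_lt hne (by rw [← hL_def]; linarith)
  have hθ0' : (0:ℝ) < θ0 := hθ0
  have hup : Tendsto (fun D : ℝ => θ0/(Real.sqrt (D-1) * Real.sqrt D)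
      + (Real.sqrt (D-1)/Real.sqrt D) * g θ0) atTop (nhds (g θ0)) := by
    have h0 : Tendsto (fun D : ℝ => θ0/(Real.sqrt (D-1) * Real.sqrt D)) atTop (nhds 0) := by
      simpa [div_eq_mul_inv] using hinv.const_mul θ0
    have := h0.add (hsq1.mul_const (g θ0))
    simpa using this
  have hlow2 : Tendsto (fun D : ℝ => (Real.sqrt (D-1)/Real.sqrt D) * L) atTop (nhds L) := by
    simpa using hsq1.mul_const L
  filter_upwards [eventually_gt_atTop 1,
    hup.eventually_lt_const (show g θ0 < L + ε by linarith),
    hlow2.eventually_const_lt (show L - ε < L by linarith)] with D hD hupD hlowD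
  have hs : 0 < Real.sqrt (D-1) := Real.sqrt_pos.2 (by linarith)
  have hsD : 0 < Real.sqrt D := Real.sqrt_pos.2 (by linarith)
  rw [Real.dist_eq, abs_sub_lt_iff]
  constructor
  · have h1 := hrs_up D hD θ0 hθ0'
    have h2 : roadSpeed (pq D)/Real.sqrt D
        ≤ (θ0/Real.sqrt (D-1) + Real.sqrt (D-1) * g θ0)/Real.sqrt D := by gcongr
    have h3 : (θ0/Real.sqrt (D-1) + Real.sqrt (D-1) * g θ0)/Real.sqrt D
        = θ0/(Real.sqrt (D-1) * Real.sqrt D) + (Real.sqrt (D-1)/Real.sqrt D) * g θ0 := by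
      field_simp
    rw [h3] at h2
    linarith
  · have h1 := hrs_low D hD
    have h2 : (Real.sqrt (D-1) * L)/Real.sqrt D ≤ roadSpeed (pq D)/Real.sqrt D := by gcongr
    have h3 : (Real.sqrt (D-1) * L)/Real.sqrt D = (Real.sqrt (D-1)/Real.sqrt D) * L := by ring
    rw [h3] at h2
    linarith
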